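/- If an E-combination A_E has only finitely many pairwise elementarily non-equivalent E-classes, then every structure A' elementarily equivalent to A_E is E-representable: every E-class of A' is elementarily equivalent to some A_i. -/

import Mathlib

open FirstOrder Language Cardinal

set_option autoImplicit false

/-- The induced structure on a subset of the universe of a structure in a relational language. -/
def subStructure (L : FirstOrder.Language.{0,0}) [L.IsRelational] (M : Type) [L.Structure M]
    (s : Set M) : L.Structure s where
  funMap := fun f _ => isEmptyElim f
  RelMap := fun r x => Structure.RelMap r (fun k => (x k : M))

/-- The `E`-class of an element `a`, as a set. -/
def classSet (L : FirstOrder.Language.{0,0}) {N : Type} [L.Structure N] (e : L.Relations 2)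
    (a : N) : Set N :=
  {b | Structure.RelMap e ![b, a]}

noncomputable instance (L : FirstOrder.Language.{0,0}) [L.IsRelational] {N : Type}
    [L.Structure N] (e : L.Relations 2) (a : N) : L.Structure (classSet L e a) :=
  subStructure L N (classSet L e a)

/-- The complete theory of the structure induced on the `E`-class of `a`. -/
noncomputable def classTheory (L : FirstOrder.Language.{0,0}) [L.IsRelational] {N : Type}
    [L.Structure N] (e : L.Relations 2) (a : N) : L.Theory :=
  L.completeTheory (classSet L e a)

section Aux

variable (L : FirstOrder.Language.{0,0}) [L.IsRelational]

/-- Relativization of a formula to the class of a parameter. -/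
noncomputable def relv (e : L.Relations 2) :
    ∀ {n : ℕ}, L.BoundedFormula Empty n → L.BoundedFormula (Fin 1) n
  | _, .falsum => .falsum
  | _, .equal t₁ t₂ => .equal (t₁.relabel (Sum.map (fun x => x.elim) id))
      (t₂.relabel (Sum.map (fun x => x.elim) id))
  | _, .rel R ts => .rel R (fun k => (ts k).relabel (Sum.map (fun x => x.elim) id))
  | _, .imp φ ψ => (relv e φ).imp (relv e ψ)
  | n, .all φ => ((Relations.boundedFormula₂ e (Term.var (Sum.inr (Fin.last n)))
      (Term.var (Sum.inl 0))).imp (relv e φ)).all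

lemma realize_term_coe {N : Type} [L.Structure N] (e : L.Relations 2) (a : N)
    {n : ℕ} (t : L.Term (Empty ⊕ Fin n)) (v : Fin n → classSet L e a) :
    Term.realize (M := N) (Sum.elim (fun _ : Fin 1 => a) (fun k => (v k : N)))
        (t.relabel (Sum.map (fun x => x.elim) id))
      = ((Term.realize (M := classSet L e a) (Sum.elim (fun x => x.elim) v) t : classSet L e a) : N) := by
  match t with
  | .var (Sum.inl x) => exact x.elim
  | .var (Sum.inr k) => rfl
  | .func f _ => exact isEmptyElim f

lemma realize_relv {N : Type} [L.Structure N] (e : L.Relations 2) (a : N) :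
    ∀ {n : ℕ} (φ : L.BoundedFormula Empty n) (v : Fin n → classSet L e a),
      (relv L e φ).Realize (fun _ => a) (fun k => (v k : N))
        ↔ φ.Realize (fun x => x.elim) v
  | _, .falsum, v => Iff.rfl
  | _, .equal t₁ t₂, v => by
      simp only [relv, BoundedFormula.Realize, realize_term_coe]
      exact ⟨fun h => Subtype.ext h, fun h => congrArg _ h⟩
  | _, .rel R ts, v => by
      simp only [relv, BoundedFormula.Realize, realize_term_coe]
      exact Iff.rfl
  | n, .all φ, v => by
      have key : ∀ y : classSet L e a,
          ((relv L e φ).Realize (fun _ => a) (Fin.snoc (fun k => ((v k : N))) (y : N))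
            ↔ φ.Realize (fun x => x.elim) (Fin.snoc v y)) := by
        intro y
        have hcomp : (fun k => (((Fin.snoc v y : Fin (n + 1) → classSet L e a) k : classSet L e a) : N))
            = Fin.snoc (fun k => ((v k : N))) (y : N) := by
          funext k
          exact congrFun (Fin.comp_snoc (fun z : classSet L e a => (z : N)) v y) k
        rw [← hcomp]
        exact realize_relv e a φ (Fin.snoc v y)
      simp only [relv, BoundedFormula.realize_all, BoundedFormula.realize_imp,
        BoundedFormula.realize_rel₂, Term.realize_var, Sum.elim_inr, Sum.elim_inl, Fin.snoc_last]
      constructor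
      · intro h y
        exact (key y).1 (h (y : N) y.2)
      · intro h x hx
        exact (key ⟨x, hx⟩).2 (h ⟨x, hx⟩)
  | _, .imp φ ψ, v => by
      simp only [relv, BoundedFormula.realize_imp, realize_relv e a φ v, realize_relv e a ψ v]

lemma realize_relv_sentence {N : Type} [L.Structure N] (e : L.Relations 2) (a : N)
    (σ : L.Sentence) :
    Formula.Realize (M := N) (relv L e σ) (fun _ => a) ↔ (classSet L e a) ⊨ σ := by
  have h := realize_relv L e a σ (default : Fin 0 → classSet L e a)
  have e1 : (fun k : Fin 0 => (((default : Fin 0 → classSet L e a) k : classSet L e a) : N))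
      = (default : Fin 0 → N) := Subsingleton.elim _ _
  have e2 : (fun x : Empty => x.elim) = (default : Empty → classSet L e a) :=
    Subsingleton.elim _ _
  rw [e1, e2] at h
  exact h

/-- universally quantify the single parameter -/
noncomputable def closeF (φ : L.Formula (Fin 1)) : L.Sentence :=
  (BoundedFormula.relabel (fun _ : Fin 1 => Sum.inr 0) φ).all

lemma realize_closeF {N : Type} [L.Structure N] (φ : L.Formula (Fin 1)) :
    N ⊨ closeF L φ ↔ ∀ b : N, Formula.Realize φ (fun _ => b) := by
  have key : ∀ b : N, ((BoundedFormula.relabel (fun _ : Fin 1 => Sum.inr 0) φ).Realize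
      (default : Empty → N) (Fin.snoc (default : Fin 0 → N) b : Fin 1 → N)
        ↔ Formula.Realize φ (fun _ => b)) := by
    intro b
    rw [BoundedFormula.realize_relabel]
    have h1 : (Sum.elim (default : Empty → N)
          ((Fin.snoc (default : Fin 0 → N) b : Fin 1 → N) ∘ Fin.castAdd 0) ∘
            fun _ : Fin 1 => Sum.inr 0)
        = fun _ : Fin 1 => b := by
      funext x
      simp [Fin.snoc]
    rw [h1]
    exact iff_of_eq (congrArg _ (Subsingleton.elim _ _))
  constructor
  · intro h b
    exact (key b).1 (BoundedFormula.realize_all.1 h b)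
  · intro h
    exact BoundedFormula.realize_all.2 fun b => (key b).2 (h b)

noncomputable def setTheory (N : Type) [L.Structure N] (s : Set N) : L.Theory :=
  @Language.completeTheory L s (subStructure L N s)

lemma classTheory_congr {N : Type} [L.Structure N] (e : L.Relations 2) {a b : N}
    (h : classSet L e a = classSet L e b) : classTheory L e a = classTheory L e b := by
  have h1 : classTheory L e a = setTheory L N (classSet L e a) := rfl
  have h2 : classTheory L e b = setTheory L N (classSet L e b) := rfl
  rw [h1, h2, h]

lemma mem_classTheory {N : Type} [L.Structure N] (e : L.Relations 2) (a : N)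
    (σ : L.Sentence) : σ ∈ classTheory L e a ↔ (classSet L e a) ⊨ σ :=
  Iff.rfl

end Aux

/-- finite conjunction over a finset (old `BoundedFormula.iInf`) -/
noncomputable def finsetInf {L : FirstOrder.Language.{0,0}} {α β : Type} {n : ℕ} (s : Finset β)
    (f : β → L.BoundedFormula α n) : L.BoundedFormula α n :=
  (s.toList.map f).foldr (· ⊓ ·) ⊤

/-- finite disjunction over a finset (old `BoundedFormula.iSup`) -/
noncomputable def finsetSup {L : FirstOrder.Language.{0,0}} {α β : Type} {n : ℕ} (s : Finset β)
    (f : β → L.BoundedFormula α n) : L.BoundedFormula α n :=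
  (s.toList.map f).foldr (· ⊔ ·) ⊥

lemma realize_finsetInf {L : FirstOrder.Language.{0,0}} {M : Type} [L.Structure M] {α β : Type}
    {n : ℕ} (s : Finset β) (f : β → L.BoundedFormula α n) (v : α → M) (v' : Fin n → M) :
    (finsetInf s f).Realize v v' ↔ ∀ b ∈ s, (f b).Realize v v' := by
  simp [finsetInf, BoundedFormula.realize_foldr_inf]

lemma realize_finsetSup {L : FirstOrder.Language.{0,0}} {M : Type} [L.Structure M] {α β : Type}
    {n : ℕ} (s : Finset β) (f : β → L.BoundedFormula α n) (v : α → M) (v' : Fin n → M) :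
    (finsetSup s f).Realize v v' ↔ ∃ b ∈ s, (f b).Realize v v' := by
  simp [finsetSup, BoundedFormula.realize_foldr_sup]

theorem stmt11 (L : FirstOrder.Language.{0,0}) [L.IsRelational] (M : Type) [L.Structure M]
    (e : L.Relations 2) (I : Type) (rep : I → M)
    (hrefl : ∀ a : M, Structure.RelMap e ![a, a])
    (hsymm : ∀ a b : M, Structure.RelMap e ![a, b] → Structure.RelMap e ![b, a])
    (htrans : ∀ a b c : M, Structure.RelMap e ![a, b] → Structure.RelMap e ![b, c] →
      Structure.RelMap e ![a, c])
    (hnocross : ∀ (n : ℕ) (r : L.Relations n) (x : Fin n → M), Structure.RelMap r x →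
      ∀ k l : Fin n, Structure.RelMap e ![x k, x l])
    (hrep : ∀ a : M, ∃ i : I, Structure.RelMap e ![a, rep i])
    (hfin : Set.Finite {T0 : L.Theory | ∃ i : I, T0 = classTheory L e (rep i)}) :
    ∀ (N : FirstOrder.Language.Theory.ModelType.{0,0,0} (L.completeTheory M)) (a : N),
      ∃ i : I, classTheory L e a = classTheory L e (rep i) := by
  classical
  intro N a
  set S : Finset L.Theory := hfin.toFinset with hSdef
  have hmemS : ∀ T : L.Theory, T ∈ S ↔ ∃ i : I, T = classTheory L e (rep i) := by
    intro T; rw [hSdef, Set.Finite.mem_toFinset]; exact Iff.rfl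
  -- every class theory of M lies in S
  have hMclass : ∀ b : M, classTheory L e b ∈ S := by
    intro b
    obtain ⟨i, hi⟩ := hrep b
    refine (hmemS _).2 ⟨i, ?_⟩
    refine classTheory_congr L e ?_
    ext x
    constructor
    · intro hx; exact htrans x b (rep i) hx hi
    · intro hx; exact htrans x (rep i) b hx (hsymm b (rep i) hi)
  -- separating sentences exist
  have hsepex : ∀ T T' : L.Theory, T ∈ S → T' ∈ S → T ≠ T' → ∃ σ, σ ∈ T ∧ σ ∉ T' := by
    intro T T' hT hT' hne
    by_contra hcon
    push_neg at hcon
    apply hne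
    obtain ⟨i, rfl⟩ := (hmemS T).1 hT
    obtain ⟨j, rfl⟩ := (hmemS T').1 hT'
    ext σ
    refine ⟨fun h => hcon σ h, fun h => ?_⟩
    by_contra hns
    have hnot : σ.not ∈ classTheory L e (rep i) := by
      rw [mem_classTheory] at hns ⊢
      rw [Sentence.Realize, Formula.realize_not]
      exact hns
    have h2 := hcon _ hnot
    rw [mem_classTheory, Sentence.Realize, Formula.realize_not] at h2
    exact h2 h
  -- the chosen separating sentences
  let sep : L.Theory → L.Theory → L.Sentence := fun T T' =>
    if h : ∃ σ, σ ∈ T ∧ σ ∉ T' then h.choose else BoundedFormula.falsum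
  have hsep1 : ∀ T ∈ S, ∀ T' ∈ S.erase T, sep T T' ∈ T ∧ sep T T' ∉ T' := by
    intro T hT T' hT'
    have h := hsepex T T' hT (Finset.mem_of_mem_erase hT')
      (Ne.symm (Finset.ne_of_mem_erase hT'))
    simp only [sep, dif_pos h]
    exact h.choose_spec
  -- characteristic formulas
  let ψ : L.Theory → L.Formula (Fin 1) := fun T =>
    finsetInf (S.erase T) (fun T' => relv L e (sep T T'))
  have hψ : ∀ (N' : Type) [L.Structure N'] (b : N') (T : L.Theory),
      Formula.Realize (M := N') (ψ T) (fun _ => b)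
        ↔ ∀ T' ∈ S.erase T, (classSet L e b) ⊨ sep T T' := by
    intro N' _ b T
    refine Iff.trans
      (realize_finsetInf (S.erase T) (fun T' => relv L e (sep T T'))
        (fun _ => b) default) ?_
    refine forall_congr' fun T' => forall_congr' fun _ => ?_
    exact realize_relv_sentence L e b (sep T T')
  -- ψ characterizes the class theory among members of S (in M)
  have hψM : ∀ (b : M) (T : L.Theory), T ∈ S →
      (Formula.Realize (M := M) (ψ T) (fun _ => b) ↔ classTheory L e b = T) := by
    intro b T hT
    rw [hψ M b T]
    constructor
    · intro h
      by_contra hne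
      have hbe : classTheory L e b ∈ S.erase T := Finset.mem_erase.2 ⟨hne, hMclass b⟩
      exact (hsep1 T hT _ hbe).2 (h _ hbe)
    · intro h T' hT'
      have h1 : sep T T' ∈ classTheory L e b := by
        rw [h]
        exact (hsep1 T hT T' hT').1
      exact h1
  -- transfer sentences from M to N
  have htransfer : ∀ σ : L.Sentence, M ⊨ σ → (N : Type) ⊨ σ := fun σ hσ =>
    N.is_model.realize_of_mem σ (mem_completeTheory.2 hσ)
  -- the disjunction sentence
  have hΦ₀M : M ⊨ closeF L (finsetSup S ψ) := by
    rw [realize_closeF]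
    intro b
    have hb : Formula.Realize (M := M) (ψ (classTheory L e b)) (fun _ => b) :=
      (hψM b _ (hMclass b)).2 rfl
    exact (realize_finsetSup S ψ (fun _ => b) default).2 ⟨_, hMclass b, hb⟩
  obtain ⟨T, hTS, hTa⟩ : ∃ T ∈ S, Formula.Realize (M := (N : Type)) (ψ T) (fun _ => a) := by
    have h := htransfer _ hΦ₀M
    rw [realize_closeF] at h
    exact (realize_finsetSup S ψ (fun _ => a) default).1 (h a)
  obtain ⟨i₀, hTi⟩ := (hmemS T).1 hTS
  refine ⟨i₀, ?_⟩
  rw [← hTi]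
  -- forward inclusion via transferred implications
  have hTsub : ∀ σ, σ ∈ T → σ ∈ classTheory L e a := by
    intro σ hσ
    have hM : M ⊨ closeF L ((ψ T).imp (relv L e σ)) := by
      rw [realize_closeF]
      intro b
      rw [Formula.realize_imp]
      intro hb
      have hbT : classTheory L e b = T := (hψM b T hTS).1 hb
      have hcs : (classSet L e b) ⊨ σ := by
        rw [← mem_classTheory, hbT]; exact hσ
      exact (realize_relv_sentence L e b σ).2 hcs
    have hN := htransfer _ hM
    rw [realize_closeF] at hN
    have h := hN a
    rw [Formula.realize_imp] at h
    exact (mem_classTheory L e a σ).2 ((realize_relv_sentence L e a σ).1 (h hTa))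
  ext σ
  refine ⟨fun h => ?_, fun h => hTsub σ h⟩
  by_contra hns
  have hnot : σ.not ∈ T := by
    rw [hTi, mem_classTheory] at hns ⊢
    rw [Sentence.Realize, Formula.realize_not]
    exact hns
  have h2 := hTsub _ hnot
  rw [mem_classTheory, Sentence.Realize, Formula.realize_not] at h2
  exact h2 h
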